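/- Let n ≥ 3 and let Ω ⊆ ℝⁿ be bounded with d = 2 sup_{y∈Ω}|y|. Then for all x ∈ ℝⁿ with |x| ≥ d and all y ∈ Ω̄, one has |G(x,y)| ≤ (2ⁿ d / s_n) · |x|^{1−n}, where G(x,y) = S_n(x−y) − S_n(ς(x)−y). -/

import Mathlib

/-- Reflection across the hyperplane `{x_n = 0}` in `ℝⁿ`. -/
noncomputable def reflHyp (n : ℕ) (x : EuclideanSpace ℝ (Fin n)) : EuclideanSpace ℝ (Fin n) :=
  WithLp.toLp 2 (fun i : Fin n => if (i : ℕ) = n - 1 then -x i else x i)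

/-- Fundamental solution of the Laplacian in `ℝⁿ`, with `s` the surface
measure of the unit sphere. -/
noncomputable def fundSol (n : ℕ) (s : ℝ) (x : EuclideanSpace ℝ (Fin n)) : ℝ :=
  if n = 2 then (1 / s) * Real.log ‖x‖
  else ‖x‖ ^ ((2 : ℝ) - n) / (((2 : ℝ) - n) * s)

/-- Dirichlet Green's function of the upper half space. -/
noncomputable def greenG (n : ℕ) (s : ℝ) (x y : EuclideanSpace ℝ (Fin n)) : ℝ :=
  fundSol n s (x - y) - fundSol n s (reflHyp n x - y)

lemma aux_pow (A B : ℝ) (hA : 0 ≤ A) (hAB : A ≤ B) (k : ℕ) :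
    B ^ (k+1) - A ^ (k+1) ≤ (k+1 : ℝ) * B ^ k * (B - A) := by
  induction k with
  | zero => simp
  | succ k ih =>
    have hB : 0 ≤ B := hA.trans hAB
    have h1 : A ^ (k+1) ≤ B ^ (k+1) := pow_le_pow_left₀ hA hAB _
    push_cast
    calc B ^ (k+1+1) - A ^ (k+1+1) = B * (B ^ (k+1) - A ^ (k+1)) + (B - A) * A ^ (k+1) := by ring
      _ ≤ B * ((k+1 : ℝ) * B ^ k * (B - A)) + (B - A) * B ^ (k+1) := by
          have h2 := mul_le_mul_of_nonneg_left ih hB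
          have h3 := mul_le_mul_of_nonneg_left h1 (sub_nonneg.2 hAB)
          linarith
      _ = ((k : ℝ) + 1 + 1) * B ^ (k+1) * (B - A) := by ring

lemma aux_inv_one (m A B : ℝ) (hm : 0 < m) (hA : m ≤ A) (hB : m ≤ B) (hAB : A ≤ B) (k : ℕ) :
    (A ^ (k+1))⁻¹ - (B ^ (k+1))⁻¹ ≤ (k+1 : ℝ) * (B - A) / m ^ (k+2) := by
  have hA0 : 0 < A := hm.trans_le hA
  have hB0 : 0 < B := hm.trans_le hB
  have hsub : (0:ℝ) ≤ B - A := sub_nonneg.2 hAB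
  have hPQ : (A ^ (k+1))⁻¹ - (B ^ (k+1))⁻¹ = (B ^ (k+1) - A ^ (k+1)) / (A ^ (k+1) * B ^ (k+1)) := by
    field_simp
  rw [hPQ]
  have hden : m ^ (k+2) * B ^ k ≤ A ^ (k+1) * B ^ (k+1) := by
    have h1 : m ^ (k+1) ≤ A ^ (k+1) := pow_le_pow_left₀ hm.le hA _
    have h2 : m * B ^ k ≤ B * B ^ k := by
      have := pow_pos hB0 k
      nlinarith
    calc m ^ (k+2) * B ^ k = m ^ (k+1) * (m * B ^ k) := by ring
    _ ≤ A ^ (k+1) * (B * B ^ k) := mul_le_mul h1 h2 (by positivity) (by positivity)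
    _ = A ^ (k+1) * B ^ (k+1) := by ring
  calc (B ^ (k+1) - A ^ (k+1)) / (A ^ (k+1) * B ^ (k+1))
      ≤ ((k+1 : ℝ) * B ^ k * (B - A)) / (m ^ (k+2) * B ^ k) :=
        div_le_div₀ (by positivity) (aux_pow A B (hm.le.trans hA) hAB k) (by positivity) hden
    _ = (k+1 : ℝ) * (B - A) / m ^ (k+2) := by
        rw [eq_div_iff (by positivity)]
        field_simp

lemma aux_inv (m A B : ℝ) (hm : 0 < m) (hA : m ≤ A) (hB : m ≤ B) (k : ℕ) :
    |(A ^ (k+1))⁻¹ - (B ^ (k+1))⁻¹| ≤ (k+1 : ℝ) * |A - B| / m ^ (k+2) := by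
  have hA0 : 0 < A := hm.trans_le hA
  have hB0 : 0 < B := hm.trans_le hB
  rcases le_total A B with h | h
  · have hle : (B ^ (k+1))⁻¹ ≤ (A ^ (k+1))⁻¹ :=
      inv_anti₀ (by positivity) (pow_le_pow_left₀ hA0.le h _)
    rw [abs_of_nonneg (sub_nonneg.2 hle), abs_sub_comm, abs_of_nonneg (sub_nonneg.2 h)]
    exact aux_inv_one m A B hm hA hB h k
  · have hle : (A ^ (k+1))⁻¹ ≤ (B ^ (k+1))⁻¹ :=
      inv_anti₀ (by positivity) (pow_le_pow_left₀ hB0.le h _)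
    rw [abs_of_nonpos (sub_nonpos.2 hle), neg_sub, abs_of_nonneg (sub_nonneg.2 h)]
    exact aux_inv_one m B A hm hB hA h k

lemma norm_reflHyp (n : ℕ) (x : EuclideanSpace ℝ (Fin n)) : ‖reflHyp n x‖ = ‖x‖ := by
  simp only [EuclideanSpace.norm_eq]
  congr 1
  refine Finset.sum_congr rfl fun i _ => ?_
  simp only [reflHyp, PiLp.toLp_apply]
  split_ifs <;> simp

lemma sq_diff_refl (n : ℕ) (x y : EuclideanSpace ℝ (Fin n)) :
    ‖x - y‖^2 - ‖reflHyp n x - y‖^2 = -2 * inner ℝ (x - reflHyp n x) y := by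
  have h1 : ∀ u v : EuclideanSpace ℝ (Fin n),
      (inner ℝ (u + v) (u - v) : ℝ) = ‖u‖^2 - ‖v‖^2 := by
    intro u v
    rw [inner_sub_right, inner_add_left, inner_add_left, real_inner_comm v u,
      real_inner_self_eq_norm_sq, real_inner_self_eq_norm_sq]
    ring
  have e1 : ‖x - y‖^2 - ‖reflHyp n x - y‖^2
      = (inner ℝ ((x - y) + (reflHyp n x - y)) ((x - y) - (reflHyp n x - y)) : ℝ) := (h1 _ _).symm
  rw [e1]
  have e2 : (x - y) - (reflHyp n x - y) = x - reflHyp n x := by abel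
  have e3 : (x - y) + (reflHyp n x - y) = (x + reflHyp n x) - (2:ℝ) • y := by
    module
  rw [e2, e3, inner_sub_left, inner_smul_left]
  have e4 : (inner ℝ (x + reflHyp n x) (x - reflHyp n x) : ℝ) = ‖x‖^2 - ‖reflHyp n x‖^2 := h1 _ _
  rw [e4, norm_reflHyp]
  have : (inner ℝ (x - reflHyp n x) y : ℝ) = inner ℝ y (x - reflHyp n x) := real_inner_comm _ _
  rw [this]
  simp

/-- Decay of the half-space Green's function in dimension `n ≥ 3`:
`|G(x,y)| ≤ (2ⁿ d / sₙ) |x|^{1−n}` for `|x| ≥ d = 2 sup_{y∈Ω}|y|` and `y ∈ Ω̄`. -/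
theorem greenG_decay_dim_ge_three (n : ℕ) (hn : 3 ≤ n) (s : ℝ) (hs : 0 < s)
    (Ω : Set (EuclideanSpace ℝ (Fin n)))
    (hne : Ω.Nonempty) (hb : Bornology.IsBounded Ω)
    (d : ℝ) (hd : d = 2 * sSup ((fun y : EuclideanSpace ℝ (Fin n) => ‖y‖) '' Ω))
    (x : EuclideanSpace ℝ (Fin n)) (hx : d ≤ ‖x‖)
    (y : EuclideanSpace ℝ (Fin n)) (hy : y ∈ closure Ω) :
    |greenG n s x y| ≤ (2 ^ n * d / s) * ‖x‖ ^ ((1 : ℝ) - n) := by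
  obtain ⟨z0, hz0⟩ := hne
  obtain ⟨R, hR⟩ := hb.subset_closedBall (0 : EuclideanSpace ℝ (Fin n))
  have hbdd : BddAbove ((fun y : EuclideanSpace ℝ (Fin n) => ‖y‖) '' Ω) := by
    refine ⟨R, ?_⟩
    rintro _ ⟨z, hz, rfl⟩
    simpa [mem_closedBall_zero_iff] using hR hz
  have hd0 : 0 ≤ d := by
    have h0 : (0:ℝ) ≤ ‖z0‖ := norm_nonneg _
    have h1 : ‖z0‖ ≤ sSup ((fun y : EuclideanSpace ℝ (Fin n) => ‖y‖) '' Ω) :=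
      le_csSup hbdd ⟨z0, hz0, rfl⟩
    rw [hd]; linarith
  have hy2 : ‖y‖ ≤ d / 2 := by
    have hsub : Ω ⊆ Metric.closedBall 0 (d/2) := by
      intro z hz
      rw [mem_closedBall_zero_iff]
      have h := le_csSup hbdd (Set.mem_image_of_mem (fun y => ‖y‖) hz)
      rw [hd]; linarith
    have hcl : closure Ω ⊆ Metric.closedBall 0 (d/2) :=
      closure_minimal hsub Metric.isClosed_closedBall
    simpa [mem_closedBall_zero_iff] using hcl hy
  by_cases hdz : d = 0
  · have hy0 : y = 0 := by
      have : ‖y‖ ≤ 0 := by rw [hdz] at hy2; linarith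
      simpa using le_antisymm this (norm_nonneg _)
    have hG0 : greenG n s x y = 0 := by
      simp [greenG, hy0, fundSol, norm_reflHyp]
    rw [hG0, hdz]
    simp
  · have hdpos : 0 < d := lt_of_le_of_ne hd0 (Ne.symm hdz)
    have hxpos : 0 < ‖x‖ := hdpos.trans_le hx
    obtain ⟨k, rfl⟩ : ∃ k, n = k + 3 := ⟨n - 3, by omega⟩
    set a := ‖x - y‖ with ha_def
    set b := ‖reflHyp (k+3) x - y‖ with hb_def
    have hm : (0:ℝ) < ‖x‖ / 2 := by linarith
    have ha : ‖x‖ / 2 ≤ a := by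
      have := norm_sub_norm_le x y
      linarith [hx]
    have hbge : ‖x‖ / 2 ≤ b := by
      have h := norm_sub_norm_le (reflHyp (k+3) x) y
      rw [norm_reflHyp] at h
      linarith [hx]
    have hapos : 0 < a := hm.trans_le ha
    have hbpos : 0 < b := hm.trans_le hbge
    -- bound on |a - b|
    have hab2 : |a^2 - b^2| ≤ 2 * d * ‖x‖ := by
      rw [ha_def, hb_def, sq_diff_refl]
      rw [abs_mul]
      have h1 : |(inner ℝ (x - reflHyp (k+3) x) y : ℝ)| ≤ ‖x - reflHyp (k+3) x‖ * ‖y‖ :=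
        abs_real_inner_le_norm _ _
      have h2 : ‖x - reflHyp (k+3) x‖ ≤ 2 * ‖x‖ := by
        have := norm_sub_le x (reflHyp (k+3) x)
        rw [norm_reflHyp] at this
        linarith
      have h3 : ‖x - reflHyp (k+3) x‖ * ‖y‖ ≤ (2 * ‖x‖) * (d/2) :=
        mul_le_mul h2 hy2 (norm_nonneg _) (by positivity)
      have : |(-2 : ℝ)| = 2 := by norm_num
      rw [this]
      nlinarith
    have habd : |a - b| ≤ 2 * d := by
      have h1 : |a - b| * (a + b) = |a^2 - b^2| := by
        rw [← abs_of_nonneg (show (0:ℝ) ≤ a + b by linarith), ← abs_mul]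
        congr 1
        ring
      have h2 : ‖x‖ ≤ a + b := by linarith
      have h3 : |a - b| * ‖x‖ ≤ |a - b| * (a + b) :=
        mul_le_mul_of_nonneg_left h2 (abs_nonneg _)
      have h4 : |a - b| * ‖x‖ ≤ 2 * d * ‖x‖ := by
        rw [h1] at h3
        linarith
      exact le_of_mul_le_mul_right (by linarith) hxpos
    -- rewrite greenG
    have hn2 : (k + 3 : ℕ) ≠ 2 := by omega
    have ea : a ^ ((2:ℝ) - ((k+3:ℕ):ℝ)) = (a ^ (k+1))⁻¹ := by
      rw [show (2:ℝ) - ((k+3:ℕ):ℝ) = -((k+1:ℕ):ℝ) by push_cast; ring,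
        Real.rpow_neg hapos.le, Real.rpow_natCast]
    have eb : b ^ ((2:ℝ) - ((k+3:ℕ):ℝ)) = (b ^ (k+1))⁻¹ := by
      rw [show (2:ℝ) - ((k+3:ℕ):ℝ) = -((k+1:ℕ):ℝ) by push_cast; ring,
        Real.rpow_neg hbpos.le, Real.rpow_natCast]
    have hG : greenG (k+3) s x y
        = ((a ^ (k+1))⁻¹ - (b ^ (k+1))⁻¹) / (((2:ℝ) - ((k+3:ℕ):ℝ)) * s) := by
      simp only [greenG, fundSol, if_neg hn2, ← ha_def, ← hb_def]
      rw [div_sub_div_same, ea, eb]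
    have hRHS : ‖x‖ ^ ((1:ℝ) - ((k+3:ℕ):ℝ)) = (‖x‖ ^ (k+2))⁻¹ := by
      rw [show (1:ℝ) - ((k+3:ℕ):ℝ) = -((k+2:ℕ):ℝ) by push_cast; ring,
        Real.rpow_neg hxpos.le, Real.rpow_natCast]
    rw [hG]
    have habs : |((a ^ (k+1))⁻¹ - (b ^ (k+1))⁻¹) / (((2:ℝ) - ((k+3:ℕ):ℝ)) * s)|
        = |(a ^ (k+1))⁻¹ - (b ^ (k+1))⁻¹| / (((k+1:ℝ)) * s) := by
      rw [abs_div, abs_mul, abs_of_pos hs,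
        show (2:ℝ) - ((k+3:ℕ):ℝ) = -((k:ℝ)+1) by push_cast; ring, abs_neg,
        abs_of_pos (by positivity : (0:ℝ) < (k:ℝ)+1)]
    rw [habs]
    have key := aux_inv (‖x‖/2) a b hm ha hbge k
    have key2 : |(a ^ (k+1))⁻¹ - (b ^ (k+1))⁻¹| ≤ (k+1 : ℝ) * (2*d) / (‖x‖/2) ^ (k+2) := by
      refine key.trans ?_
      gcongr
    have hfin : ((k+1:ℝ) * (2*d) / (‖x‖/2) ^ (k+2)) / ((k+1:ℝ) * s)
        = 2 ^ (k+3) * d / s * (‖x‖ ^ (k+2))⁻¹ := by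
      have hk1 : ((k:ℝ)+1) ≠ 0 := by positivity
      have hx0 : ‖x‖ ≠ 0 := ne_of_gt hxpos
      field_simp
      rw [div_pow, pow_succ (2:ℝ) (k+2), ← mul_assoc, div_mul_cancel₀ _ (by positivity)]; ring
    calc |(a ^ (k+1))⁻¹ - (b ^ (k+1))⁻¹| / (((k+1:ℝ)) * s)
        ≤ ((k+1:ℝ) * (2*d) / (‖x‖/2) ^ (k+2)) / ((k+1:ℝ) * s) := by
          gcongr
      _ = 2 ^ (k+3) * d / s * (‖x‖ ^ (k+2))⁻¹ := hfin
      _ = 2 ^ (k+3) * d / s * ‖x‖ ^ ((1:ℝ) - ((k+3:ℕ):ℝ)) := by rw [hRHS]
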